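/- If A ⊆ S is piecewise syndetic near zero and A = A_1 ∪ … ∪ A_n is a finite cover of A by subsets of S, then there exists i ∈ {1,…,n} such that A_i is piecewise syndetic near zero; that is, piecewise syndeticity near zero is partition regular. -/
import Mathlib


open Set Filter

attribute [local instance] Ultrafilter.add

/-- `S` is a subsemigroup of `((0,∞),+)` which is dense in `(0,∞)`
    (with the usual topology of `ℝ`). -/
def DenseSubsemigroupPos (S : Set ℝ) : Prop :=
  (∀ x ∈ S, 0 < x) ∧ (∀ x ∈ S, ∀ y ∈ S, x + y ∈ S) ∧ Ioi (0 : ℝ) ⊆ closure S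

/-- `0⁺(S)`: the ultrafilters (on `S`, viewed as ultrafilters on `ℝ` containing `S`)
    all of whose members meet every interval `(0,ε)`. -/
def zeroPlus (S : Set ℝ) : Set (Ultrafilter ℝ) :=
  {p | ∀ ε > (0 : ℝ), Ioo (0 : ℝ) ε ∩ S ∈ p}

/-- `L` is a left ideal of the subsemigroup `T` of `βS_d`. -/
def IsLeftIdealIn (T L : Set (Ultrafilter ℝ)) : Prop :=
  L.Nonempty ∧ L ⊆ T ∧ ∀ p ∈ T, ∀ q ∈ L, p + q ∈ L

/-- `L` is a minimal left ideal of the subsemigroup `T` of `βS_d`. -/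
def IsMinimalLeftIdealIn (T L : Set (Ultrafilter ℝ)) : Prop :=
  IsLeftIdealIn T L ∧ ∀ L', IsLeftIdealIn T L' → L' ⊆ L → L' = L

/-- `K(T)`: the smallest two sided ideal of `T`, i.e. the union of all
    minimal left ideals of `T`. -/
def smallestIdeal (T : Set (Ultrafilter ℝ)) : Set (Ultrafilter ℝ) :=
  ⋃₀ {L | IsMinimalLeftIdealIn T L}

/-- `A` is thick near zero (as a subset of `S`). -/
def ThickNearZero (S A : Set ℝ) : Prop :=
  ∃ ε > (0 : ℝ), ∀ F : Finset ℝ, F.Nonempty → ↑F ⊆ Ioo (0 : ℝ) ε ∩ S →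
    ∀ δ > (0 : ℝ), ∃ y ∈ Ioo (0 : ℝ) δ ∩ S, ∀ x ∈ F, x + y ∈ A

/-- `A` is syndetic near zero (as a subset of `S`). -/
def SyndeticNearZero (S A : Set ℝ) : Prop :=
  ∀ ε > (0 : ℝ), ∃ F : Finset ℝ, F.Nonempty ∧ ↑F ⊆ Ioo (0 : ℝ) ε ∩ S ∧
    ∃ δ > (0 : ℝ), ∀ x ∈ Ioo (0 : ℝ) δ ∩ S, ∃ t ∈ F, t + x ∈ A

/-- `A` is piecewise syndetic near zero (as a subset of `S`). -/
def PiecewiseSyndeticNearZero (S A : Set ℝ) : Prop :=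
  ∀ δ > (0 : ℝ), ∃ F : Finset ℝ, F.Nonempty ∧ ↑F ⊆ Ioo (0 : ℝ) δ ∩ S ∧
    ThickNearZero S {y | y ∈ S ∧ ∃ t ∈ F, t + y ∈ A}

/-- `T_0`: sequences in `S` with infimum `0`. -/
def T0 (S : Set ℝ) : Set (ℕ → ℝ) :=
  {f | (∀ n, f n ∈ S) ∧ IsGLB (range f) 0}

/-- `A` is a `J`-set near zero (as a subset of `S`). -/
def JSetNearZero (S A : Set ℝ) : Prop :=
  ∀ F : Finset (ℕ → ℝ), F.Nonempty → ↑F ⊆ T0 S → ∀ δ > (0 : ℝ),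
    ∃ a ∈ S ∩ Ioo (0 : ℝ) δ, ∃ H : Finset ℕ, H.Nonempty ∧
      ∀ f ∈ F, a + ∑ t ∈ H, f t ∈ A

/-- `J_0(S)`: the members of `0⁺(S)` all of whose members are `J`-sets near zero. -/
def J0 (S : Set ℝ) : Set (Ultrafilter ℝ) :=
  {p | p ∈ zeroPlus S ∧ ∀ A : Set ℝ, A ⊆ S → A ∈ p → JSetNearZero S A}

/-- `A` is central near zero: it belongs to some idempotent in `K(0⁺(S))`. -/
def CentralNearZero (S A : Set ℝ) : Prop :=
  ∃ p : Ultrafilter ℝ, p + p = p ∧ p ∈ smallestIdeal (zeroPlus S) ∧ A ∈ p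

/-- `A` is a `C`-set near zero (it satisfies the conclusion of the Central Sets
    Theorem near zero). -/
def CSetNearZero (S A : Set ℝ) : Prop :=
  ∀ δ ∈ Ioo (0 : ℝ) 1,
    ∃ (α : Finset (ℕ → ℝ) → ℝ) (H : Finset (ℕ → ℝ) → Finset ℕ),
      (∀ F : Finset (ℕ → ℝ), F.Nonempty → ↑F ⊆ T0 S →
        α F ∈ S ∧ α F < δ ∧ (H F).Nonempty) ∧
      (∀ F G : Finset (ℕ → ℝ), F.Nonempty → ↑F ⊆ T0 S → G.Nonempty → ↑G ⊆ T0 S →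
        F ⊂ G → ∀ i ∈ H F, ∀ j ∈ H G, i < j) ∧
      (∀ m : ℕ, ∀ G : Fin (m + 1) → Finset (ℕ → ℝ), ∀ f : Fin (m + 1) → ℕ → ℝ,
        (∀ i, (G i).Nonempty) → (∀ i, ↑(G i) ⊆ T0 S) →
        (∀ i j, i < j → G i ⊂ G j) → (∀ i, f i ∈ G i) →
        ∑ i, (α (G i) + ∑ t ∈ H (G i), f i t) ∈ A)

open Pointwise in
lemma pws_key (S : Set ℝ) (hadd : ∀ x ∈ S, ∀ y ∈ S, x + y ∈ S)
    (A B C : Set ℝ) (hBC : A ⊆ B ∪ C) (hA : PiecewiseSyndeticNearZero S A) :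
    PiecewiseSyndeticNearZero S B ∨ PiecewiseSyndeticNearZero S C := by
  by_contra hcon
  push_neg at hcon
  obtain ⟨hB, hC⟩ := hcon
  unfold PiecewiseSyndeticNearZero at hB hC
  push_neg at hB hC
  obtain ⟨δ₁, hδ₁, hB⟩ := hB
  obtain ⟨δ₂, hδ₂, hC⟩ := hC
  set δ : ℝ := min δ₁ δ₂ / 2 with hδdef
  have hδpos : 0 < δ := by positivity
  obtain ⟨G, hGne, hGsub, εT, hεT, hthick⟩ := hA δ hδpos
  have hGδ₂ : (↑G : Set ℝ) ⊆ Ioo 0 δ₂ ∩ S := by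
    intro x hx
    obtain ⟨⟨h1, h2⟩, h3⟩ := hGsub hx
    exact ⟨⟨h1, lt_of_lt_of_le h2 (by rw [hδdef]; nlinarith [min_le_right δ₁ δ₂])⟩, h3⟩
  -- C-side witness set is not thick
  have hCnt := hC G hGne hGδ₂
  unfold ThickNearZero at hCnt
  push_neg at hCnt
  set ε : ℝ := min (εT / 2) (δ₁ / 2) with hεdef
  have hεpos : 0 < ε := by positivity
  obtain ⟨F, hFne, hFsub, δ₀, hδ₀, hF⟩ := hCnt ε hεpos
  -- the combined finite set F + G
  have hFGsub : (↑(F + G) : Set ℝ) ⊆ Ioo 0 δ₁ ∩ S := by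
    intro s hs
    rw [Finset.mem_coe, Finset.mem_add] at hs
    obtain ⟨x, hx, t, ht, rfl⟩ := hs
    obtain ⟨⟨hx1, hx2⟩, hx3⟩ := hFsub hx
    obtain ⟨⟨ht1, ht2⟩, ht3⟩ := hGsub ht
    refine ⟨⟨by linarith, ?_⟩, hadd x hx3 t ht3⟩
    have h1 : ε ≤ δ₁ / 2 := min_le_right _ _
    have h2 : δ ≤ δ₁ / 2 := by rw [hδdef]; nlinarith [min_le_left δ₁ δ₂]
    linarith
  have hFGne : (F + G).Nonempty := hFne.add hGne
  -- the set witnessing B's piecewise syndeticity at scale δ₁ is thick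
  refine hB (F + G) hFGne hFGsub ⟨min (εT / 2) (δ₀ / 2), by positivity, ?_⟩
  intro F' hF'ne hF'sub δ' hδ'
  have hδ''pos : 0 < min δ' (δ₀ / 2) := by positivity
  have hFF'sub : (↑(F + F') : Set ℝ) ⊆ Ioo 0 εT ∩ S := by
    intro s hs
    rw [Finset.mem_coe, Finset.mem_add] at hs
    obtain ⟨x, hx, x', hx', rfl⟩ := hs
    obtain ⟨⟨hx1, hx2⟩, hx3⟩ := hFsub hx
    obtain ⟨⟨hx'1, hx'2⟩, hx'3⟩ := hF'sub hx'
    refine ⟨⟨by linarith, ?_⟩, hadd x hx3 x' hx'3⟩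
    have h1 : ε ≤ εT / 2 := min_le_left _ _
    have h2 : min (εT / 2) (δ₀ / 2) ≤ εT / 2 := min_le_left _ _
    linarith
  obtain ⟨y, ⟨⟨hy1, hy2⟩, hy3⟩, hy⟩ :=
    hthick (F + F') (hFne.add hF'ne) hFF'sub (min δ' (δ₀ / 2)) hδ''pos
  refine ⟨y, ⟨⟨hy1, lt_of_lt_of_le hy2 (min_le_left _ _)⟩, hy3⟩, ?_⟩
  intro x' hx'
  obtain ⟨⟨hx'1, hx'2⟩, hx'3⟩ := hF'sub hx'
  have hzS : x' + y ∈ S := hadd x' hx'3 y hy3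
  have hzδ₀ : x' + y ∈ Ioo (0:ℝ) δ₀ ∩ S := by
    refine ⟨⟨by linarith, ?_⟩, hzS⟩
    have h1 : min (εT / 2) (δ₀ / 2) ≤ δ₀ / 2 := min_le_right _ _
    have h2 : min δ' (δ₀ / 2) ≤ δ₀ / 2 := min_le_right _ _
    linarith
  obtain ⟨x, hx, hxz⟩ := hF (x' + y) hzδ₀
  have hmem : x + x' ∈ F + F' := Finset.add_mem_add hx hx'
  have hT := hy (x + x') hmem
  obtain ⟨hTS, t, ht, htA⟩ := hT
  have heq : t + (x + x' + y) = t + (x + (x' + y)) := by ring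
  rw [heq] at htA
  rcases hBC htA with hin | hin
  · refine ⟨hzS, x + t, Finset.add_mem_add hx ht, ?_⟩
    have heq2 : x + t + (x' + y) = t + (x + (x' + y)) := by ring
    rw [heq2]; exact hin
  · exact absurd ⟨hadd x (hFsub hx).2 (x' + y) hzS, t, ht, hin⟩ hxz

lemma pws_not_empty (S : Set ℝ) (hdense : Ioi (0:ℝ) ⊆ closure S) :
    ¬ PiecewiseSyndeticNearZero S (∅ : Set ℝ) := by
  intro h
  obtain ⟨G, hGne, hGsub, ε, hε, hthick⟩ := h 1 one_pos
  -- find an element of S in (0, ε)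
  have hmem : (ε / 2 : ℝ) ∈ closure S := hdense (by simp [hε, half_pos])
  rw [mem_closure_iff] at hmem
  obtain ⟨s, hs1, hs2⟩ := hmem (Ioo 0 ε) isOpen_Ioo ⟨half_pos hε, half_lt_self hε⟩
  obtain ⟨y, _, hy⟩ := hthick {s} ⟨s, Finset.mem_singleton_self s⟩
    (by intro x hx; rw [Finset.coe_singleton, Set.mem_singleton_iff] at hx; subst hx
        exact ⟨hs1, hs2⟩) 1 one_pos
  obtain ⟨_, t, _, htA⟩ := hy s (Finset.mem_singleton_self s)
  exact htA

lemma pws_aux (S : Set ℝ) (hadd : ∀ x ∈ S, ∀ y ∈ S, x + y ∈ S)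
    (hdense : Ioi (0:ℝ) ⊆ closure S) :
    ∀ n (A : Set ℝ) (𝒜 : Fin n → Set ℝ), PiecewiseSyndeticNearZero S A →
      A ⊆ ⋃ i, 𝒜 i → ∃ i, PiecewiseSyndeticNearZero S (𝒜 i) := by
  intro n
  induction n with
  | zero =>
    intro A 𝒜 hA hsub
    exfalso
    apply pws_not_empty S hdense
    have : A = ∅ := by
      apply Set.eq_empty_of_subset_empty
      intro x hx
      obtain ⟨_, ⟨i, rfl⟩, _⟩ := hsub hx
      exact i.elim0
    rwa [this] at hA
  | succ n ih =>
    intro A 𝒜 hA hsub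
    have hsub2 : A ⊆ 𝒜 0 ∪ ⋃ i : Fin n, 𝒜 i.succ := by
      intro x hx
      obtain ⟨_, ⟨i, rfl⟩, hxi⟩ := hsub hx
      rcases Fin.eq_zero_or_eq_succ i with rfl | ⟨j, rfl⟩
      · exact Or.inl hxi
      · exact Or.inr (Set.mem_iUnion.mpr ⟨j, hxi⟩)
    rcases pws_key S hadd A (𝒜 0) (⋃ i : Fin n, 𝒜 i.succ) hsub2 hA with h | h
    · exact ⟨0, h⟩
    · obtain ⟨i, hi⟩ := ih (⋃ i : Fin n, 𝒜 i.succ) (fun i => 𝒜 i.succ) h (le_refl _)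
      exact ⟨i.succ, hi⟩

/-- piecewise syndeticity near zero is partition regular. -/
theorem piecewiseSyndeticNearZero_partition_regular (S : Set ℝ)
    (hS : DenseSubsemigroupPos S) (A : Set ℝ) (hA : A ⊆ S)
    (hpws : PiecewiseSyndeticNearZero S A) (n : ℕ) (𝒜 : Fin n → Set ℝ)
    (h𝒜 : ∀ i, 𝒜 i ⊆ S) (hcover : A = ⋃ i, 𝒜 i) :
    ∃ i, PiecewiseSyndeticNearZero S (𝒜 i) := by
  exact pws_aux S hS.2.1 hS.2.2 n A 𝒜 hpws (le_of_eq hcover)
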